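/- For a graph G and vertices v and w at distance at most d, the induced subgraph G_d(v,w) consisting of all vertices of G that lie on a walk from v to w of length at most d has diameter at most d. -/

import Mathlib

private lemma induce_walk_exists {V : Type*} (G : SimpleGraph V) (S : Set V) :
    ∀ {a b : V} (p : G.Walk a b) (ha : a ∈ S) (hb : b ∈ S),
      (∀ x ∈ p.support, x ∈ S) →
      ∃ q : (G.induce S).Walk ⟨a, ha⟩ ⟨b, hb⟩, q.length = p.length := by
  intro a b p
  induction p with
  | nil => exact fun ha hb _ => ⟨.nil, rfl⟩
  | @cons a c b h p ih =>
    intro ha hb hp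
    have hm : c ∈ S := hp _ (by simp)
    obtain ⟨q, hq⟩ := ih hm hb (fun x hx => hp x (by simp [hx]))
    exact ⟨.cons (by exact h) q, by show q.length + 1 = p.length + 1; rw [hq]⟩

/-- For a graph G and vertices v, w at distance at most d, the induced
subgraph G_d(v,w) on all vertices lying on a walk from v to w of length at most d
has diameter at most d. -/
theorem stmt_1 {V : Type*} (G : SimpleGraph V) (v w : V) (d : ℕ)
    (h : ∃ p : G.Walk v w, p.length ≤ d)
    (S : Set V) (hS : S = {u : V | ∃ p : G.Walk v w, p.length ≤ d ∧ u ∈ p.support}) :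
    ∀ a b : S, (G.induce S).edist a b ≤ d := by
  classical
  rintro ⟨a, haS⟩ ⟨b, hbS⟩
  obtain ⟨p, hpd, hap⟩ : ∃ p : G.Walk v w, p.length ≤ d ∧ a ∈ p.support := by rw [hS] at haS; exact haS
  obtain ⟨q, hqd, hbq⟩ : ∃ q : G.Walk v w, q.length ≤ d ∧ b ∈ q.support := by rw [hS] at hbS; exact hbS
  -- all vertices of p and q lie in S
  have hpS : ∀ x ∈ p.support, x ∈ S := fun x hx => by rw [hS]; exact ⟨p, hpd, hx⟩
  have hqS : ∀ x ∈ q.support, x ∈ S := fun x hx => by rw [hS]; exact ⟨q, hqd, hx⟩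
  have hsplitp := congrArg SimpleGraph.Walk.length (p.take_spec hap)
  have hsplitq := congrArg SimpleGraph.Walk.length (q.take_spec hbq)
  rw [SimpleGraph.Walk.length_append] at hsplitp hsplitq
  set k1 := (p.takeUntil a hap).length + (q.takeUntil b hbq).length with hk1
  set k2 := (p.dropUntil a hap).length + (q.dropUntil b hbq).length with hk2
  have hsum : k1 + k2 ≤ 2 * d := by omega
  -- walk 1 : a → v → b
  have w1 : ∃ r : (G.induce S).Walk ⟨a, haS⟩ ⟨b, hbS⟩, r.length = k1 := by
    obtain ⟨r, hr⟩ := induce_walk_exists G S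
      (((p.takeUntil a hap).reverse).append (q.takeUntil b hbq)) haS hbS
      (by
        intro x hx
        rw [SimpleGraph.Walk.mem_support_append_iff] at hx
        rcases hx with hx | hx
        · rw [SimpleGraph.Walk.support_reverse, List.mem_reverse] at hx
          exact hpS x (p.support_takeUntil_subset hap hx)
        · exact hqS x (q.support_takeUntil_subset hbq hx))
    exact ⟨r, by simpa [SimpleGraph.Walk.length_append] using hr⟩
  -- walk 2 : a → w → b
  have w2 : ∃ r : (G.induce S).Walk ⟨a, haS⟩ ⟨b, hbS⟩, r.length = k2 := by
    obtain ⟨r, hr⟩ := induce_walk_exists G S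
      ((p.dropUntil a hap).append (q.dropUntil b hbq).reverse) haS hbS
      (by
        intro x hx
        rw [SimpleGraph.Walk.mem_support_append_iff] at hx
        rcases hx with hx | hx
        · exact hpS x (p.support_dropUntil_subset hap hx)
        · rw [SimpleGraph.Walk.support_reverse, List.mem_reverse] at hx
          exact hqS x (q.support_dropUntil_subset hbq hx))
    exact ⟨r, by simpa [SimpleGraph.Walk.length_append] using hr⟩
  rcases le_or_gt k1 d with hk | hk
  · obtain ⟨r, hr⟩ := w1
    calc (G.induce S).edist ⟨a, haS⟩ ⟨b, hbS⟩ ≤ r.length := SimpleGraph.edist_le r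
    _ ≤ d := by rw [hr]; exact_mod_cast hk
  · obtain ⟨r, hr⟩ := w2
    have hk2d : k2 ≤ d := by omega
    calc (G.induce S).edist ⟨a, haS⟩ ⟨b, hbS⟩ ≤ r.length := SimpleGraph.edist_le r
    _ ≤ d := by rw [hr]; exact_mod_cast hk2d
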